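/- Let q ≥ 3, β > 0, j ∈ [q] and s* ∈ [1/q, 1). Set a := 2βq·s*(1−s*)/(q−1), a' := 2β(1−s*)/(q−1), b := 2β·((1−s*)/(q−1))·(s* − (1−s*)/(q−1)), and let A be the q×q matrix with entries A_{jj} = a, A_{kk} = a' for k ≠ j, A_{kj} = −b for k ≠ j, and 0 elsewhere. Then a − a' = (q−1)b ≥ 0, and the eigenvalues of the symmetric matrix (A + Aᵀ)/2 are λ₁ := (1/2)(a + a' + √((a−a')² + (q−1)b²)), the value a' with multiplicity q−2, and λ_q := (1/2)(a + a' − √((a−a')² + (q−1)b²)); all of these eigenvalues are positive, and the largest absolute value of an eigenvalue of (A + Aᵀ)/2 equals λ₁. -/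

import Mathlib

noncomputable section
attribute [local instance] Classical.propDecidable

open Finset Polynomial Matrix

/-- The constant `a = 2βq·s*(1-s*)/(q-1)`. -/
def aC (q : ℕ) (β s : ℝ) : ℝ := 2 * β * q * s * (1 - s) / ((q : ℝ) - 1)

/-- The constant `a' = 2β(1-s*)/(q-1)`. -/
def aC' (q : ℕ) (β s : ℝ) : ℝ := 2 * β * (1 - s) / ((q : ℝ) - 1)

/-- The constant `b = 2β·((1-s*)/(q-1))·(s* - (1-s*)/(q-1))`. -/
def bC (q : ℕ) (β s : ℝ) : ℝ :=
  2 * β * ((1 - s) / ((q : ℝ) - 1)) * (s - (1 - s) / ((q : ℝ) - 1))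

/-- The matrix `A` with `A_{jj} = a`, `A_{kk} = a'` and `A_{kj} = -b` for `k ≠ j`,
and all other entries zero. -/
def matA (q : ℕ) (j : Fin q) (a a' b : ℝ) : Matrix (Fin q) (Fin q) ℝ :=
  fun k l => if k = j ∧ l = j then a else if k = l then a' else if l = j then -b else 0

/-- The symmetric part `(A + Aᵀ)/2` of `A = A(x)`. -/
def symA (q : ℕ) (j : Fin q) (β s : ℝ) : Matrix (Fin q) (Fin q) ℝ :=
  (1 / 2 : ℝ) • (matA q j (aC q β s) (aC' q β s) (bC q β s) +
    (matA q j (aC q β s) (aC' q β s) (bC q β s))ᵀ)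

/-- The eigenvalue `λ₁ = (a + a' + √((a-a')² + (q-1)b²))/2`. -/
def lam1 (q : ℕ) (β s : ℝ) : ℝ :=
  (aC q β s + aC' q β s +
    Real.sqrt ((aC q β s - aC' q β s) ^ 2 + ((q : ℝ) - 1) * (bC q β s) ^ 2)) / 2

/-- The eigenvalue `λ_q = (a + a' - √((a-a')² + (q-1)b²))/2`. -/
def lamq (q : ℕ) (β s : ℝ) : ℝ :=
  (aC q β s + aC' q β s -
    Real.sqrt ((aC q β s - aC' q β s) ^ 2 + ((q : ℝ) - 1) * (bC q β s) ^ 2)) / 2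


lemma myEvalCharpoly {n : Type*} [DecidableEq n] [Fintype n] (M : Matrix n n ℝ) (t : ℝ) :
    M.charpoly.eval t = (t • (1 : Matrix n n ℝ) - M).det := by
  rw [Matrix.charpoly, ← Polynomial.coe_evalRingHom, RingHom.map_det]
  congr 1
  ext i k
  by_cases h : i = k
  · subst h
    simp [charmatrix_apply_eq, Matrix.one_apply]
  · simp [charmatrix_apply_ne _ _ _ h, Matrix.one_apply, h]

lemma detArrow (q : ℕ) (hq : 3 ≤ q) (j : Fin q) (a a' b t : ℝ) (ht : t ≠ a') :
    (t • (1 : Matrix (Fin q) (Fin q) ℝ) -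
        (1 / 2 : ℝ) • (matA q j a a' b + (matA q j a a' b)ᵀ)).det
      = (t - a') ^ (q - 2) * ((t - a) * (t - a') - ((q : ℝ) - 1) * (b / 2) ^ 2) := by
  classical
  haveI : Unique {k : Fin q // k = j} := ⟨⟨⟨j, rfl⟩⟩, by rintro ⟨x, rfl⟩; rfl⟩
  let Ab : Matrix {k : Fin q // k = j} {k : Fin q // k = j} ℝ := fun _ _ => t - a
  let Bb : Matrix {k : Fin q // k = j} {k : Fin q // ¬ k = j} ℝ := fun _ _ => b / 2
  let Cb : Matrix {k : Fin q // ¬ k = j} {k : Fin q // k = j} ℝ := fun _ _ => b / 2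
  let Db : Matrix {k : Fin q // ¬ k = j} {k : Fin q // ¬ k = j} ℝ := (t - a') • 1
  have hsub : (t • (1 : Matrix (Fin q) (Fin q) ℝ) -
        (1 / 2 : ℝ) • (matA q j a a' b + (matA q j a a' b)ᵀ)).submatrix
        (Equiv.sumCompl (fun k : Fin q => k = j)) (Equiv.sumCompl (fun k : Fin q => k = j))
      = Matrix.fromBlocks Ab Bb Cb Db := by
    ext i k
    cases i with
    | inl i =>
      have hi : (i : Fin q) = j := i.2
      cases k with
      | inl k =>
        have hk : (k : Fin q) = j := k.2
        show _ = Ab i k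
        simp [Ab, matA, Matrix.one_apply, hi, hk]
        ring
      | inr k =>
        have hk : ¬ (k : Fin q) = j := k.2
        have hki : ¬ (k : Fin q) = i := by rw [hi]; exact hk
        have hjk : ¬ j = (k : Fin q) := fun h => hk h.symm
        show _ = Bb i k
        simp [Bb, matA, Matrix.one_apply, hi, hk, hki, hjk]
        ring
    | inr i =>
      have hi : ¬ (i : Fin q) = j := i.2
      cases k with
      | inl k =>
        have hk : (k : Fin q) = j := k.2
        have hik : ¬ (i : Fin q) = k := by rw [hk]; exact hi
        have hji : ¬ j = (i : Fin q) := fun h => hi h.symm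
        show _ = Cb i k
        simp [Cb, matA, Matrix.one_apply, hi, hk, hik, hji]
        ring
      | inr k =>
        have hk : ¬ (k : Fin q) = j := k.2
        by_cases hik : (i : Fin q) = (k : Fin q)
        · have h2 : i = k := Subtype.ext hik
          simp [Db, matA, Matrix.one_apply, hi, hk, hik, h2, Matrix.smul_apply]
          ring
        · have hik' : i ≠ k := fun h => hik (congrArg Subtype.val h)
          simp [Db, matA, Matrix.one_apply, hi, hk, hik, hik', Ne.symm hik,
            Matrix.smul_apply]
  have hcard : Fintype.card {k : Fin q // ¬ k = j} = q - 1 := by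
    rw [Fintype.card_subtype_compl, Fintype.card_fin, Fintype.card_subtype_eq]
  have hta : t - a' ≠ 0 := sub_ne_zero.mpr ht
  have hDinv : Db * ((t - a')⁻¹ • (1 : Matrix {k : Fin q // ¬ k = j} {k : Fin q // ¬ k = j} ℝ)) = 1 := by
    show ((t - a') • (1 : Matrix _ _ ℝ)) * _ = 1
    rw [smul_mul_smul_comm, mul_inv_cancel₀ hta, one_mul, one_smul]
  have hDinv' : ((t - a')⁻¹ • (1 : Matrix {k : Fin q // ¬ k = j} {k : Fin q // ¬ k = j} ℝ)) * Db = 1 := by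
    show _ * ((t - a') • (1 : Matrix _ _ ℝ)) = 1
    rw [smul_mul_smul_comm, inv_mul_cancel₀ hta, one_mul, one_smul]
  haveI : Invertible Db := ⟨(t - a')⁻¹ • 1, hDinv', hDinv⟩
  have hinv : (⅟ Db : Matrix _ _ ℝ) = (t - a')⁻¹ • 1 := invOf_eq_right_inv hDinv
  rw [← Matrix.det_submatrix_equiv_self (Equiv.sumCompl (fun k : Fin q => k = j)), hsub,
    Matrix.det_fromBlocks₂₂, hinv]
  have h1q : (1 : ℕ) ≤ q := by omega
  have hcast : ((q - 1 : ℕ) : ℝ) = (q : ℝ) - 1 := by push_cast [Nat.cast_sub h1q]; ring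
  have hBDC : Bb * ((t - a')⁻¹ • (1 : Matrix {k : Fin q // ¬ k = j} {k : Fin q // ¬ k = j} ℝ)) * Cb =
      Matrix.of (fun _ _ => ((q : ℝ) - 1) * ((t - a')⁻¹ * (b / 2) ^ 2)) := by
    rw [Matrix.mul_smul, Matrix.mul_one]
    ext i k
    rw [Matrix.mul_apply]
    simp only [Matrix.smul_apply, smul_eq_mul]
    simp only [Bb, Cb]
    rw [Finset.sum_const, Finset.card_univ, hcard, nsmul_eq_mul, hcast]
    simp only [Matrix.of_apply]
    ring
  rw [hBDC]
  have hdetD : Db.det = (t - a') ^ (q - 1) := by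
    show ((t - a') • (1 : Matrix _ _ ℝ)).det = _
    rw [Matrix.det_smul, Matrix.det_one, hcard, mul_one]
  rw [hdetD, Matrix.det_unique]
  have hq1 : q - 1 = (q - 2) + 1 := by omega
  rw [hq1, pow_succ]
  show (t - a') ^ (q - 2) * (t - a') *
      ((t - a) - ((q : ℝ) - 1) * ((t - a')⁻¹ * (b / 2) ^ 2)) = _
  field_simp


theorem stmt13 (q : ℕ) (hq : 3 ≤ q) (β : ℝ) (hβ : 0 < β) (j : Fin q)
    (s : ℝ) (hs0 : 1 / (q : ℝ) ≤ s) (hs1 : s < 1) :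
    (aC q β s - aC' q β s = ((q : ℝ) - 1) * bC q β s ∧ 0 ≤ bC q β s) ∧
    (symA q j β s).charpoly =
      (X - C (lam1 q β s)) * (X - C (aC' q β s)) ^ (q - 2) * (X - C (lamq q β s)) ∧
    (0 < lam1 q β s ∧ 0 < aC' q β s ∧ 0 < lamq q β s) ∧
    (∀ t : ℝ, (symA q j β s).charpoly.IsRoot t → |t| ≤ lam1 q β s) ∧
    (symA q j β s).charpoly.IsRoot (lam1 q β s) := by
  have hQ3 : (3 : ℝ) ≤ (q : ℝ) := by exact_mod_cast hq
  have hQ1 : (0 : ℝ) < (q : ℝ) - 1 := by linarith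
  have hQ0 : (0 : ℝ) < (q : ℝ) := by linarith
  have hs' : (0 : ℝ) < 1 - s := by linarith
  have hspos : (0 : ℝ) < s := lt_of_lt_of_le (by positivity) hs0
  have hqs : (1 : ℝ) ≤ (q : ℝ) * s := by
    rw [div_le_iff₀ hQ0] at hs0; linarith
  have part1a : aC q β s - aC' q β s = ((q : ℝ) - 1) * bC q β s := by
    unfold aC aC' bC
    field_simp
    ring
  have part1b : 0 ≤ bC q β s := by
    unfold bC
    have h1 : 0 ≤ 2 * β * ((1 - s) / ((q : ℝ) - 1)) :=
      mul_nonneg (by linarith) (div_nonneg (by linarith) hQ1.le)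
    have h2 : 0 ≤ s - (1 - s) / ((q : ℝ) - 1) := by
      rw [sub_nonneg, div_le_iff₀ hQ1]
      nlinarith
    exact mul_nonneg h1 h2
  have ha' : 0 < aC' q β s := by
    unfold aC'
    exact div_pos (mul_pos (mul_pos two_pos hβ) hs') hQ1
  have ha : 0 < aC q β s := by
    unfold aC
    exact div_pos (mul_pos (mul_pos (mul_pos (mul_pos two_pos hβ) hQ0) hspos) hs') hQ1
  have hba : bC q β s < aC' q β s := by
    unfold bC aC'
    have hu : 0 < (1 - s) / ((q : ℝ) - 1) := div_pos hs' hQ1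
    have h2βu : 0 < 2 * β * ((1 - s) / ((q : ℝ) - 1)) := by
      have := mul_pos (mul_pos two_pos hβ) hu
      linarith [mul_pos (mul_pos two_pos hβ) hu]
    have hsu : s - (1 - s) / ((q : ℝ) - 1) < 1 := by nlinarith
    calc 2 * β * ((1 - s) / ((q : ℝ) - 1)) * (s - (1 - s) / ((q : ℝ) - 1))
        < 2 * β * ((1 - s) / ((q : ℝ) - 1)) * 1 := by
          exact mul_lt_mul_of_pos_left hsu h2βu
      _ = 2 * β * (1 - s) / ((q : ℝ) - 1) := by ring
  have hkey : ((q : ℝ) - 1) * (bC q β s) ^ 2 < 4 * (aC q β s * aC' q β s) := by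
    have haa : aC q β s = aC' q β s + ((q : ℝ) - 1) * bC q β s := by linarith
    rw [haa]
    nlinarith [mul_pos ha' ha',
      mul_nonneg (mul_nonneg hQ1.le part1b) (by linarith : (0:ℝ) ≤ 4 * aC' q β s - bC q β s)]
  set R : ℝ := (aC q β s - aC' q β s) ^ 2 + ((q : ℝ) - 1) * (bC q β s) ^ 2 with hRdef
  have hR0 : 0 ≤ R := add_nonneg (sq_nonneg _) (mul_nonneg hQ1.le (sq_nonneg _))
  set r : ℝ := Real.sqrt R with hrdef
  have hr0 : 0 ≤ r := Real.sqrt_nonneg _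
  have hr2 : r ^ 2 = R := Real.sq_sqrt hR0
  have hl1 : lam1 q β s = (aC q β s + aC' q β s + r) / 2 := rfl
  have hlq : lamq q β s = (aC q β s + aC' q β s - r) / 2 := rfl
  have hsum : 0 < aC q β s + aC' q β s := by linarith
  have hRlt : R < (aC q β s + aC' q β s) ^ 2 := by
    rw [hRdef]; nlinarith [hkey]
  have hrlt : r < aC q β s + aC' q β s := (Real.sqrt_lt' hsum).mpr hRlt
  have hl1pos : 0 < lam1 q β s := by rw [hl1]; linarith
  have hlqpos : 0 < lamq q β s := by rw [hlq]; linarith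
  have haa' : aC' q β s ≤ aC q β s := by nlinarith [mul_nonneg hQ1.le part1b]
  have ha'l1 : aC' q β s ≤ lam1 q β s := by rw [hl1]; linarith
  have hlql1 : lamq q β s ≤ lam1 q β s := by rw [hl1, hlq]; linarith
  have hcp : (symA q j β s).charpoly =
      (X - C (lam1 q β s)) * (X - C (aC' q β s)) ^ (q - 2) * (X - C (lamq q β s)) := by
    apply Polynomial.eq_of_infinite_eval_eq
    apply Set.Infinite.mono (s := {aC' q β s}ᶜ)
    · intro t ht
      have ht' : t ≠ aC' q β s := ht
      have hfac : (t - lam1 q β s) * (t - lamq q β s) =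
          (t - aC q β s) * (t - aC' q β s) - ((q : ℝ) - 1) * (bC q β s / 2) ^ 2 := by
        rw [hl1, hlq, hRdef] at *
        linear_combination (-(1 : ℝ)/4) * hr2
      simp only [Set.mem_setOf_eq, myEvalCharpoly, symA]
      rw [detArrow q hq j _ _ _ t ht']
      simp only [eval_mul, eval_pow, eval_sub, eval_X, eval_C]
      rw [← hfac]
      ring
    · exact (Set.finite_singleton _).infinite_compl
  refine ⟨⟨part1a, part1b⟩, hcp, ⟨hl1pos, ha', hlqpos⟩, ?_, ?_⟩
  · intro t hroot
    rw [hcp] at hroot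
    have h0 : (t - lam1 q β s) * (t - aC' q β s) ^ (q - 2) * (t - lamq q β s) = 0 := by
      simpa [Polynomial.IsRoot] using hroot
    have hq2 : q - 2 ≠ 0 := by omega
    rcases mul_eq_zero.1 h0 with h | h
    · rcases mul_eq_zero.1 h with h | h
      · have : t = lam1 q β s := by linarith [sub_eq_zero.1 h]
        rw [this, abs_of_pos hl1pos]
      · have : t = aC' q β s := sub_eq_zero.1 (pow_eq_zero_iff hq2 |>.1 h)
        rw [this, abs_of_pos ha']
        exact ha'l1
    · have : t = lamq q β s := sub_eq_zero.1 h
      rw [this, abs_of_pos hlqpos]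
      exact hlql1
  · rw [hcp]
    simp [Polynomial.IsRoot]
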